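/- Let h(X) have finite exponential moment near 0 and be non-degenerate under P₀. For sufficiently small η > 0, the optimal value of the problem: maximize E_f[h(X)] over probability measures P_f ≪ P₀ with D(P_f‖P₀) ≤ η, equals ψ'(β*), where β* is the unique positive solution of β ψ'(β) − ψ(β) = η and ψ(β) = log E₀[e^{β h(X)}]. -/

import Mathlib

open MeasureTheory Filter Set

section AuxStmt6
open Real
set_option linter.unusedSectionVars false
variable {Ω : Type*} [MeasurableSpace Ω] {P : Measure Ω} [IsProbabilityMeasure P] {h : Ω → ℝ}

private lemma key_abs_le' (δ t : ℝ) (hδ : 0 < δ) : |t| ≤ (exp (δ*t) + exp (-(δ*t)))/δ := by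
  rw [le_div_iff₀ hδ]
  have h1 : δ * |t| + 1 ≤ exp (δ * |t|) := Real.add_one_le_exp _
  have h2 : exp (δ * |t|) ≤ exp (δ*t) + exp (-(δ*t)) := by
    rcases abs_cases t with ⟨he, _⟩ | ⟨he, _⟩
    · rw [he]; nlinarith [Real.exp_pos (-(δ*t))]
    · rw [he, mul_neg, ← neg_mul]; nlinarith [Real.exp_pos (δ*t)]
  nlinarith

private lemma key_exp_mul_le' {b1 b2 b : ℝ} (h1 : b1 ≤ b) (h2 : b ≤ b2) (t : ℝ) :
    exp (b * t) ≤ exp (b1 * t) + exp (b2 * t) := by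
  rcases le_total 0 t with ht | ht
  · have : b * t ≤ b2 * t := mul_le_mul_of_nonneg_right h2 ht
    calc exp (b * t) ≤ exp (b2 * t) := exp_le_exp.2 this
    _ ≤ _ := by nlinarith [exp_pos (b1 * t)]
  · have : b * t ≤ b1 * t := mul_le_mul_of_nonpos_right h1 ht
    calc exp (b * t) ≤ exp (b1 * t) := exp_le_exp.2 this
    _ ≤ _ := by nlinarith [exp_pos (b2 * t)]

private lemma integrable_exp_between' (hmeas : Measurable h) {b1 b2 b : ℝ}
    (hb1 : Integrable (fun x => exp (b1 * h x)) P) (hb2 : Integrable (fun x => exp (b2 * h x)) P)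
    (h1 : b1 ≤ b) (h2 : b ≤ b2) : Integrable (fun x => exp (b * h x)) P := by
  refine (hb1.add hb2).mono' ((hmeas.const_mul b).exp).aestronglyMeasurable ?_
  filter_upwards with x
  rw [Real.norm_eq_abs, abs_of_pos (exp_pos _)]
  exact key_exp_mul_le' h1 h2 (h x)

private lemma integrable_mul_exp' (hmeas : Measurable h) {b δ : ℝ} (hδ : 0 < δ)
    (hp : Integrable (fun x => exp ((b+δ) * h x)) P)
    (hm : Integrable (fun x => exp ((b-δ) * h x)) P) :
    Integrable (fun x => exp (b * h x) * h x) P := by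
  refine (((hp.add hm).div_const δ)).mono'
    (((hmeas.const_mul b).exp.mul hmeas)).aestronglyMeasurable ?_
  filter_upwards with x
  have hk := key_abs_le' δ (h x) hδ
  have : ‖exp (b * h x) * h x‖ = exp (b * h x) * |h x| := by
    rw [norm_mul, Real.norm_eq_abs, Real.norm_eq_abs, abs_of_pos (exp_pos _)]
  rw [this]
  have h2 : exp (b * h x) * |h x| ≤ exp (b * h x) * ((exp (δ * h x) + exp (-(δ * h x)))/δ) :=
    mul_le_mul_of_nonneg_left hk (le_of_lt (exp_pos _))
  calc exp (b * h x) * |h x| ≤ exp (b * h x) * ((exp (δ * h x) + exp (-(δ * h x)))/δ) := h2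
    _ = (exp ((b+δ) * h x) + exp ((b-δ) * h x)) / δ := by
        rw [mul_div_assoc']
        congr 1
        rw [mul_add, mul_comm (exp (b * h x)), mul_comm (exp (b * h x)), ← exp_add, ← exp_add]
        ring_nf

private lemma key_deriv_bound' {b δ t s : ℝ} (hδ : 0 < δ) (ht : |t - b| < δ) :
    |s| * exp (t * s) ≤ 2/δ * (exp ((b - 2*δ) * s) + exp ((b + 2*δ) * s)) := by
  have h1 : |s| ≤ (exp (δ*s) + exp (-(δ*s)))/δ := key_abs_le' δ s hδ
  have habs := abs_lt.1 ht
  have h2 : exp (t*s) * exp (δ*s) = exp ((t+δ)*s) := by rw [← exp_add]; ring_nf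
  have h3 : exp (t*s) * exp (-(δ*s)) = exp ((t-δ)*s) := by rw [← exp_add]; ring_nf
  have h4 : exp ((t+δ)*s) ≤ exp ((b - 2*δ) * s) + exp ((b + 2*δ) * s) :=
    key_exp_mul_le' (by linarith) (by linarith) s
  have h5 : exp ((t-δ)*s) ≤ exp ((b - 2*δ) * s) + exp ((b + 2*δ) * s) :=
    key_exp_mul_le' (by linarith) (by linarith) s
  have h6 : |s| * exp (t*s) ≤ ((exp (δ*s) + exp (-(δ*s)))/δ) * exp (t*s) :=
    mul_le_mul_of_nonneg_right h1 (le_of_lt (exp_pos _))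
  calc |s| * exp (t*s) ≤ ((exp (δ*s) + exp (-(δ*s)))/δ) * exp (t*s) := h6
    _ = (exp ((t+δ)*s) + exp ((t-δ)*s))/δ := by
        rw [div_mul_eq_mul_div]; congr 1
        rw [add_mul, mul_comm (exp (δ*s)), mul_comm (exp (-(δ*s))), h2, h3]
    _ ≤ 2/δ * (exp ((b - 2*δ) * s) + exp ((b + 2*δ) * s)) := by
        rw [div_mul_eq_mul_div, div_le_div_iff₀ hδ hδ]
        nlinarith

private lemma hasDerivAt_Z' (hmeas : Measurable h) {b δ : ℝ} (hδ : 0 < δ)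
    (hS : ∀ t ∈ Icc (b - 2*δ) (b + 2*δ), Integrable (fun x => exp (t * h x)) P) :
    HasDerivAt (fun t => ∫ x, exp (t * h x) ∂P) (∫ x, exp (b * h x) * h x ∂P) b := by
  have hbound : Integrable (fun x => 2/δ * (exp ((b - 2*δ) * h x) + exp ((b + 2*δ) * h x))) P :=
    (((hS _ ⟨le_refl _, by linarith⟩).add (hS _ ⟨by linarith, le_refl _⟩)).const_mul _)
  have := hasDerivAt_integral_of_dominated_loc_of_deriv_le (F := fun t x => exp (t * h x))
    (F' := fun t x => exp (t * h x) * h x) (x₀ := b)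
    (bound := fun x => 2/δ * (exp ((b - 2*δ) * h x) + exp ((b + 2*δ) * h x))) (Metric.ball_mem_nhds b hδ)
    (Eventually.of_forall fun t => ((hmeas.const_mul t).exp).aestronglyMeasurable)
    (hS b ⟨by linarith, by linarith⟩)
    (((hmeas.const_mul b).exp.mul hmeas)).aestronglyMeasurable
    ?_ hbound ?_
  · exact this.2
  · filter_upwards with x t ht
    rw [Real.norm_eq_abs, abs_mul, abs_of_pos (exp_pos _), mul_comm]
    exact key_deriv_bound' hδ (by simpa [Real.dist_eq] using Metric.mem_ball.1 ht)
  · filter_upwards with x t _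
    have : HasDerivAt (fun u : ℝ => u * h x) (h x) t := by
      simpa using (hasDerivAt_id t).mul_const (h x)
    simpa [mul_comm] using this.exp

private lemma continuousAt_N' (hmeas : Measurable h) {b δ : ℝ} (hδ : 0 < δ)
    (hS : ∀ t ∈ Icc (b - 2*δ) (b + 2*δ), Integrable (fun x => exp (t * h x)) P) :
    ContinuousAt (fun t => ∫ x, exp (t * h x) * h x ∂P) b := by
  refine continuousAt_of_dominated
    (Eventually.of_forall fun t => ((hmeas.const_mul t).exp.mul hmeas).aestronglyMeasurable)
    ?_ (((hS _ ⟨le_refl _, by linarith⟩).add (hS _ ⟨by linarith, le_refl _⟩)).const_mul (2/δ)) ?_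
  · filter_upwards [Metric.ball_mem_nhds b hδ] with t ht
    filter_upwards with x
    rw [Real.norm_eq_abs, abs_mul, abs_of_pos (exp_pos _), mul_comm]
    exact key_deriv_bound' hδ (by simpa [Real.dist_eq] using Metric.mem_ball.1 ht)
  · filter_upwards with x
    fun_prop

private lemma key_corr_nonneg' {b1 b2 : ℝ} (h12 : b1 < b2) (s t : ℝ) :
    0 ≤ (s - t) * (exp (b2*s + b1*t) - exp (b1*s + b2*t)) := by
  rcases le_total s t with hst | hst
  · have he : b2*s + b1*t ≤ b1*s + b2*t := by nlinarith
    have := mul_nonneg (neg_nonneg.2 (show s - t ≤ 0 by linarith))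
      (neg_nonneg.2 (sub_nonpos.2 (exp_le_exp.2 he)))
    nlinarith [this]
  · have he : b1*s + b2*t ≤ b2*s + b1*t := by nlinarith
    exact mul_nonneg (by linarith) (by simpa using exp_le_exp.2 he)

private lemma key_corr_eq_zero' {b1 b2 : ℝ} (h12 : b1 < b2) {s t : ℝ}
    (hz : (s - t) * (exp (b2*s + b1*t) - exp (b1*s + b2*t)) = 0) : s = t := by
  by_contra hne
  have h1 : s - t ≠ 0 := sub_ne_zero.2 hne
  have h2 : b2*s + b1*t ≠ b1*s + b2*t := by
    intro he; apply hne
    have : (b2 - b1) * (s - t) = 0 := by linarith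
    rcases mul_eq_zero.1 this with hc | hc
    · linarith
    · linarith [sub_eq_zero.1 hc]
  exact (mul_ne_zero h1 (sub_ne_zero.2 fun he => h2 (Real.exp_injective he))) hz

private lemma N_Z_strict' (hmeas : Measurable h) (hnd : ¬ ∃ c : ℝ, h =ᵐ[P] fun _ => c)
    {b1 b2 δ : ℝ} (hδ : 0 < δ) (h12 : b1 < b2)
    (hi : ∀ t ∈ Icc (b1 - δ) (b2 + δ), Integrable (fun x => exp (t * h x)) P) :
    (∫ x, exp (b1 * h x) * h x ∂P) * (∫ x, exp (b2 * h x) ∂P)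
      < (∫ x, exp (b2 * h x) * h x ∂P) * (∫ x, exp (b1 * h x) ∂P) := by
  have hle := h12.le
  have he1 : Integrable (fun x => exp (b1 * h x)) P := hi b1 ⟨by linarith, by linarith⟩
  have he2 : Integrable (fun x => exp (b2 * h x)) P := hi b2 ⟨by linarith, by linarith⟩
  have hf1 : Integrable (fun x => exp (b1 * h x) * h x) P :=
    integrable_mul_exp' hmeas hδ (hi _ ⟨by linarith, by linarith⟩) (hi _ ⟨by linarith, by linarith⟩)
  have hf2 : Integrable (fun x => exp (b2 * h x) * h x) P :=
    integrable_mul_exp' hmeas hδ (hi _ ⟨by linarith, by linarith⟩) (hi _ ⟨by linarith, by linarith⟩)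
  set G : Ω × Ω → ℝ := fun p =>
    (h p.1 - h p.2) * (exp (b2 * h p.1 + b1 * h p.2) - exp (b1 * h p.1 + b2 * h p.2)) with hG
  set Gexp : Ω × Ω → ℝ := fun p =>
    exp (b2 * h p.1) * h p.1 * exp (b1 * h p.2) - exp (b1 * h p.1) * h p.1 * exp (b2 * h p.2)
      - exp (b2 * h p.1) * (exp (b1 * h p.2) * h p.2)
      + exp (b1 * h p.1) * (exp (b2 * h p.2) * h p.2) with hGexp
  have hGeq : G = Gexp := by
    funext p
    simp only [hG, hGexp, Real.exp_add]
    ring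
  have hGexp_int : Integrable Gexp (P.prod P) :=
    (((hf2.mul_prod he1).sub (hf1.mul_prod he2)).sub (he2.mul_prod hf1)).add (he1.mul_prod hf2)
  have hGint : Integrable G (P.prod P) := hGeq ▸ hGexp_int
  have hA : Integrable (fun p : Ω × Ω => exp (b2 * h p.1) * h p.1 * exp (b1 * h p.2)
      - exp (b1 * h p.1) * h p.1 * exp (b2 * h p.2)
      - exp (b2 * h p.1) * (exp (b1 * h p.2) * h p.2)) (P.prod P) :=
    ((hf2.mul_prod he1).sub (hf1.mul_prod he2)).sub (he2.mul_prod hf1)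
  have hAB : Integrable (fun p : Ω × Ω => exp (b2 * h p.1) * h p.1 * exp (b1 * h p.2)
      - exp (b1 * h p.1) * h p.1 * exp (b2 * h p.2)) (P.prod P) :=
    (hf2.mul_prod he1).sub (hf1.mul_prod he2)
  have e0 : ∫ p, Gexp p ∂(P.prod P)
      = (∫ p : Ω × Ω, (exp (b2 * h p.1) * h p.1 * exp (b1 * h p.2)
          - exp (b1 * h p.1) * h p.1 * exp (b2 * h p.2)
          - exp (b2 * h p.1) * (exp (b1 * h p.2) * h p.2)) ∂(P.prod P))
        + ∫ p : Ω × Ω, exp (b1 * h p.1) * (exp (b2 * h p.2) * h p.2) ∂(P.prod P) :=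
    integral_add hA (he1.mul_prod hf2)
  have e1 : (∫ p : Ω × Ω, (exp (b2 * h p.1) * h p.1 * exp (b1 * h p.2)
          - exp (b1 * h p.1) * h p.1 * exp (b2 * h p.2)
          - exp (b2 * h p.1) * (exp (b1 * h p.2) * h p.2)) ∂(P.prod P))
      = (∫ p : Ω × Ω, (exp (b2 * h p.1) * h p.1 * exp (b1 * h p.2)
          - exp (b1 * h p.1) * h p.1 * exp (b2 * h p.2)) ∂(P.prod P))
        - ∫ p : Ω × Ω, exp (b2 * h p.1) * (exp (b1 * h p.2) * h p.2) ∂(P.prod P) :=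
    integral_sub hAB (he2.mul_prod hf1)
  have e2 : (∫ p : Ω × Ω, (exp (b2 * h p.1) * h p.1 * exp (b1 * h p.2)
          - exp (b1 * h p.1) * h p.1 * exp (b2 * h p.2)) ∂(P.prod P))
      = (∫ p : Ω × Ω, exp (b2 * h p.1) * h p.1 * exp (b1 * h p.2) ∂(P.prod P))
        - ∫ p : Ω × Ω, exp (b1 * h p.1) * h p.1 * exp (b2 * h p.2) ∂(P.prod P) :=
    integral_sub (hf2.mul_prod he1) (hf1.mul_prod he2)
  have p1 : (∫ p : Ω × Ω, exp (b2 * h p.1) * h p.1 * exp (b1 * h p.2) ∂(P.prod P))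
      = (∫ x, exp (b2 * h x) * h x ∂P) * ∫ x, exp (b1 * h x) ∂P :=
    integral_prod_mul (fun x => exp (b2 * h x) * h x) (fun y => exp (b1 * h y))
  have p2 : (∫ p : Ω × Ω, exp (b1 * h p.1) * h p.1 * exp (b2 * h p.2) ∂(P.prod P))
      = (∫ x, exp (b1 * h x) * h x ∂P) * ∫ x, exp (b2 * h x) ∂P :=
    integral_prod_mul (fun x => exp (b1 * h x) * h x) (fun y => exp (b2 * h y))
  have p3 : (∫ p : Ω × Ω, exp (b2 * h p.1) * (exp (b1 * h p.2) * h p.2) ∂(P.prod P))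
      = (∫ x, exp (b2 * h x) ∂P) * ∫ x, exp (b1 * h x) * h x ∂P :=
    integral_prod_mul (fun x => exp (b2 * h x)) (fun y => exp (b1 * h y) * h y)
  have p4 : (∫ p : Ω × Ω, exp (b1 * h p.1) * (exp (b2 * h p.2) * h p.2) ∂(P.prod P))
      = (∫ x, exp (b1 * h x) ∂P) * ∫ x, exp (b2 * h x) * h x ∂P :=
    integral_prod_mul (fun x => exp (b1 * h x)) (fun y => exp (b2 * h y) * h y)
  have hIG : ∫ p, G p ∂(P.prod P)
      = 2 * ((∫ x, exp (b2 * h x) * h x ∂P) * (∫ x, exp (b1 * h x) ∂P)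
          - (∫ x, exp (b1 * h x) * h x ∂P) * (∫ x, exp (b2 * h x) ∂P)) := by
    rw [hGeq]
    simp only [hGexp]
    rw [e0, e1, e2, p1, p2, p3, p4]
    ring
  have hGnonneg : 0 ≤ G := fun p => key_corr_nonneg' h12 _ _
  have hpos : 0 < ∫ p, G p ∂(P.prod P) := by
    rcases (integral_nonneg hGnonneg).lt_or_eq with hlt | heq
    · exact hlt
    · exfalso
      have hae : G =ᵐ[P.prod P] 0 :=
        (integral_eq_zero_iff_of_nonneg hGnonneg hGint).1 heq.symm
      have hae2 : ∀ᵐ p ∂(P.prod P), h p.1 = h p.2 := by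
        filter_upwards [hae] with p hp
        exact key_corr_eq_zero' h12 hp
      have hae3 : ∀ᵐ x ∂P, ∀ᵐ y ∂P, h x = h y := Measure.ae_ae_of_ae_prod hae2
      haveI : (ae P).NeBot := ae_neBot.2 (IsProbabilityMeasure.ne_zero P)
      obtain ⟨x₀, hx₀⟩ := hae3.exists
      exact hnd ⟨h x₀, hx₀.mono fun y hy => hy.symm⟩
  rw [hIG] at hpos
  linarith

private lemma key_gibbs' {a c : ℝ} (ha : 0 ≤ a) (hc : 0 < c) : a * log c - a * log a ≤ c - a := by
  rcases ha.lt_or_eq with ha' | ha'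
  · have hlog : log c - log a ≤ c / a - 1 := by
      have := Real.log_le_sub_one_of_pos (div_pos hc ha')
      rwa [Real.log_div hc.ne' ha'.ne'] at this
    have := mul_le_mul_of_nonneg_left hlog ha'.le
    calc a * log c - a * log a = a * (log c - log a) := by ring
      _ ≤ a * (c / a - 1) := this
      _ = c - a := by field_simp
  · simp [← ha', hc.le]

private lemma upper_bound' (hmeas : Measurable h) {r : ℝ} (hr : 0 < r)
    (hint : ∀ θ ∈ Ioo (-r) r, Integrable (fun x => exp (θ * h x)) P)
    {β η : ℝ} (hβ : 0 < β) (hβr : β < r)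
    {Q : Measure Ω} (hQ : IsProbabilityMeasure Q) (hQP : Q ≪ P)
    (hLint : Integrable (fun x => (Q.rnDeriv P x).toReal * log (Q.rnDeriv P x).toReal) P)
    (hKL : ∫ x, (Q.rnDeriv P x).toReal * log (Q.rnDeriv P x).toReal ∂P ≤ η) :
    β * (∫ x, h x ∂Q) ≤ log (∫ x, exp (β * h x) ∂P) + η := by
  haveI : NeZero P := ⟨IsProbabilityMeasure.ne_zero P⟩
  set L : Ω → ℝ := fun x => (Q.rnDeriv P x).toReal with hL
  have hLmeas : Measurable L := (Measure.measurable_rnDeriv Q P).ennreal_toReal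
  have hLnn : ∀ x, 0 ≤ L x := fun x => ENNReal.toReal_nonneg
  have hLint1 : Integrable L P := Measure.integrable_toReal_rnDeriv
  have hLone : ∫ x, L x ∂P = 1 := by
    rw [hL, Measure.integral_toReal_rnDeriv hQP]
    simp
  have hexp2 : Integrable (fun x => exp ((r/2) * h x)) P := hint _ ⟨by linarith, by linarith⟩
  have hexp2' : Integrable (fun x => exp (-(r/2) * h x)) P := hint _ ⟨by linarith, by linarith⟩
  have hbnd_int : Integrable (fun x => L x * log (L x)
      + (exp ((r/2) * h x) + exp (-(r/2) * h x)) - L x) P :=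
    (hLint.add (hexp2.add hexp2')).sub hLint1
  have hptw1 : ∀ x, (r/2) * (L x * |h x|) ≤ L x * log (L x)
      + (exp ((r/2) * h x) + exp (-(r/2) * h x)) - L x := by
    intro x
    have hc : (0:ℝ) < exp ((r/2) * |h x|) := exp_pos _
    have hg := key_gibbs' (hLnn x) hc
    rw [Real.log_exp] at hg
    have hee : exp ((r/2) * |h x|) ≤ exp ((r/2) * h x) + exp (-(r/2) * h x) := by
      rcases abs_cases (h x) with ⟨he, _⟩ | ⟨he, _⟩
      · rw [he]; nlinarith [exp_pos (-(r/2) * h x)]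
      · rw [he, mul_neg, ← neg_mul]; nlinarith [exp_pos ((r/2) * h x)]
    nlinarith
  have hLh : Integrable (fun x => L x * h x) P := by
    refine ((hbnd_int.const_mul (2/r)).mono' (hLmeas.mul hmeas).aestronglyMeasurable ?_)
    filter_upwards with x
    have := hptw1 x
    rw [Real.norm_eq_abs, abs_mul, abs_of_nonneg (hLnn x)]
    rw [div_mul_eq_mul_div, le_div_iff₀ hr]
    nlinarith
  set Z : ℝ := ∫ x, exp (β * h x) ∂P with hZ
  have hβint : Integrable (fun x => exp (β * h x)) P := hint β ⟨by linarith, hβr⟩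
  have hZpos : 0 < Z := integral_exp_pos hβint
  have hptw2 : ∀ x, β * (L x * h x) - log Z * L x - L x * log (L x)
      ≤ exp (β * h x) / Z - L x := by
    intro x
    have hc : (0:ℝ) < exp (β * h x) / Z := div_pos (exp_pos _) hZpos
    have hg := key_gibbs' (hLnn x) hc
    rw [Real.log_div (exp_pos _).ne' hZpos.ne', Real.log_exp] at hg
    nlinarith
  have hLHSint : Integrable (fun x => β * (L x * h x) - log Z * L x - L x * log (L x)) P :=
    ((hLh.const_mul β).sub (hLint1.const_mul (log Z))).sub hLint
  have hRHSint : Integrable (fun x => exp (β * h x) / Z - L x) P :=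
    (hβint.div_const Z).sub hLint1
  have hmono := integral_mono hLHSint hRHSint hptw2
  have eL1 : ∫ x, (β * (L x * h x) - log Z * L x - L x * log (L x)) ∂P
      = (∫ x, (β * (L x * h x) - log Z * L x) ∂P) - ∫ x, L x * log (L x) ∂P :=
    integral_sub ((hLh.const_mul β).sub (hLint1.const_mul (log Z))) hLint
  have eL2 : ∫ x, (β * (L x * h x) - log Z * L x) ∂P
      = (∫ x, β * (L x * h x) ∂P) - ∫ x, log Z * L x ∂P :=
    integral_sub (hLh.const_mul β) (hLint1.const_mul (log Z))
  have eL3 : ∫ x, β * (L x * h x) ∂P = β * ∫ x, L x * h x ∂P := integral_const_mul _ _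
  have eL4 : ∫ x, log Z * L x ∂P = log Z * ∫ x, L x ∂P := integral_const_mul _ _
  have eR1 : ∫ x, (exp (β * h x) / Z - L x) ∂P
      = (∫ x, exp (β * h x) / Z ∂P) - ∫ x, L x ∂P := integral_sub (hβint.div_const Z) hLint1
  have eR2 : ∫ x, exp (β * h x) / Z ∂P = Z / Z := integral_div _ _
  have hQh : ∫ x, h x ∂Q = ∫ x, L x * h x ∂P := by
    rw [hL]
    have := integral_rnDeriv_smul (f := h) hQP
    simpa [smul_eq_mul] using this.symm
  rw [eL1, eL2, eL3, eL4, eR1, eR2, hLone, div_self hZpos.ne'] at hmono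
  rw [hQh]
  linarith

private lemma tilted_mem' (hmeas : Measurable h) {β δ : ℝ} (hδ : 0 < δ)
    (hi : ∀ t ∈ Icc (β - δ) (β + δ), Integrable (fun x => exp (t * h x)) P) :
    ∃ Q : Measure Ω, IsProbabilityMeasure Q ∧ Q ≪ P ∧
      Integrable (fun x => (Q.rnDeriv P x).toReal * log (Q.rnDeriv P x).toReal) P ∧
      (∫ x, (Q.rnDeriv P x).toReal * log (Q.rnDeriv P x).toReal ∂P)
        = β * ((∫ x, exp (β * h x) * h x ∂P) / (∫ x, exp (β * h x) ∂P))
            - log (∫ x, exp (β * h x) ∂P) ∧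
      (∫ x, h x ∂Q) = (∫ x, exp (β * h x) * h x ∂P) / (∫ x, exp (β * h x) ∂P) := by
  haveI : NeZero P := ⟨IsProbabilityMeasure.ne_zero P⟩
  have hβint : Integrable (fun x => exp (β * h x)) P := hi β ⟨by linarith, by linarith⟩
  have hN : Integrable (fun x => exp (β * h x) * h x) P :=
    integrable_mul_exp' hmeas hδ (hi _ ⟨by linarith, le_refl _⟩) (hi _ ⟨le_refl _, by linarith⟩)
  set Z : ℝ := ∫ x, exp (β * h x) ∂P with hZ
  set N : ℝ := ∫ x, exp (β * h x) * h x ∂P with hNdef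
  have hZpos : 0 < Z := integral_exp_pos hβint
  set Q : Measure Ω := P.tilted (fun x => β * h x) with hQdef
  have hprob : IsProbabilityMeasure Q := isProbabilityMeasure_tilted hβint
  have hac : Q ≪ P := tilted_absolutelyContinuous P _
  have hrn : Q.rnDeriv P =ᵐ[P] fun x => ENNReal.ofReal (exp (β * h x) / Z) :=
    rnDeriv_tilted_left_self ((hmeas.const_mul β).aemeasurable)
  have hrn' : (fun x => (Q.rnDeriv P x).toReal) =ᵐ[P] fun x => exp (β * h x) / Z := by
    filter_upwards [hrn] with x hx
    rw [hx, ENNReal.toReal_ofReal (by positivity)]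
  have hcongr : (fun x => (Q.rnDeriv P x).toReal * log (Q.rnDeriv P x).toReal)
      =ᵐ[P] fun x => β / Z * (exp (β * h x) * h x) - log Z / Z * exp (β * h x) := by
    filter_upwards [hrn'] with x hx
    rw [hx, Real.log_div (exp_pos _).ne' hZpos.ne', Real.log_exp]
    field_simp
  have hint2 : Integrable (fun x => β / Z * (exp (β * h x) * h x)
      - log Z / Z * exp (β * h x)) P := (hN.const_mul _).sub (hβint.const_mul _)
  have hKLint : Integrable (fun x => (Q.rnDeriv P x).toReal * log (Q.rnDeriv P x).toReal) P :=
    hint2.congr hcongr.symm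
  have hKLval : (∫ x, (Q.rnDeriv P x).toReal * log (Q.rnDeriv P x).toReal ∂P)
      = β * (N / Z) - log Z := by
    rw [integral_congr_ae hcongr]
    rw [integral_sub (hN.const_mul _) (hβint.const_mul _), integral_const_mul,
      integral_const_mul, ← hNdef, ← hZ]
    field_simp
  have hQh : (∫ x, h x ∂Q) = N / Z := by
    rw [hQdef, integral_tilted]
    have : (fun x => (exp (β * h x) / ∫ x, exp (β * h x) ∂P) • h x)
        = fun x => (exp (β * h x) * h x) / Z := by
      funext x
      rw [smul_eq_mul, ← hZ]
      ring
    rw [this, integral_div, ← hNdef]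
  exact ⟨Q, hprob, hac, hKLint, hKLval, hQh⟩

end AuxStmt6

/-- For sufficiently small `η > 0`, the maximum of `E_f[h(X)]` over probability measures
`P_f ≪ P₀` with `D(P_f‖P₀) ≤ η` equals `ψ'(β*)`, where `β*` is the unique positive
solution of `β ψ'(β) − ψ(β) = η`. -/
theorem stmt6 {Ω : Type*} [MeasurableSpace Ω] (P : Measure Ω) [IsProbabilityMeasure P]
    (h : Ω → ℝ) (hmeas : Measurable h) (r : ℝ) (hr : 0 < r)
    (hint : ∀ θ ∈ Set.Ioo (-r) r, Integrable (fun x => Real.exp (θ * h x)) P)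
    (hnd : ¬ ∃ c : ℝ, h =ᵐ[P] fun _ => c)
    (ψ : ℝ → ℝ) (hψ : ψ = fun b => Real.log (∫ x, Real.exp (b * h x) ∂P)) :
    ∃ η₀ > 0, ∀ η ∈ Set.Ioo (0 : ℝ) η₀,
      (∃! β : ℝ, 0 < β ∧ β * deriv ψ β - ψ β = η) ∧
      ∀ β : ℝ, 0 < β → β * deriv ψ β - ψ β = η →
        IsGreatest {v : ℝ | ∃ Q : Measure Ω, IsProbabilityMeasure Q ∧ Q ≪ P ∧
            Integrable (fun x =>
              (Q.rnDeriv P x).toReal * Real.log (Q.rnDeriv P x).toReal) P ∧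
            (∫ x, (Q.rnDeriv P x).toReal * Real.log (Q.rnDeriv P x).toReal ∂P) ≤ η ∧
            v = ∫ x, h x ∂Q} (deriv ψ β) := by
  classical
  open Real in
  haveI : NeZero P := ⟨IsProbabilityMeasure.ne_zero P⟩
  set S : Set ℝ := {b | Integrable (fun x => Real.exp (b * h x)) P} with hSdef
  set Z : ℝ → ℝ := fun b => ∫ x, Real.exp (b * h x) ∂P with hZdef
  set N : ℝ → ℝ := fun b => ∫ x, Real.exp (b * h x) * h x ∂P with hNdef
  set D : ℝ → ℝ := fun b => N b / Z b with hDdef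
  have hIooS : Set.Ioo (-r) r ⊆ S := fun t ht => hint t ht
  have hZpos : ∀ b, b ∈ S → 0 < Z b := fun b hb => integral_exp_pos hb
  have hψb : ∀ b, ψ b = Real.log (Z b) := fun b => by rw [hψ]
  -- good points
  have hgoodIoo : ∀ b ∈ Set.Ioo (-r) r, ∃ δ > 0, Set.Icc (b - 2*δ) (b + 2*δ) ⊆ S := by
    intro b hb
    obtain ⟨hb1, hb2⟩ := hb
    refine ⟨min (b + r) (r - b) / 3,
      div_pos (lt_min (by linarith) (by linarith)) (by norm_num), fun t ht => hIooS ⟨?_, ?_⟩⟩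
    · have h1 : min (b + r) (r - b) ≤ b + r := min_le_left _ _
      have h2 : (0:ℝ) < min (b + r) (r - b) := lt_min (by linarith) (by linarith)
      have := ht.1
      linarith
    · have h1 : min (b + r) (r - b) ≤ r - b := min_le_right _ _
      have h2 : (0:ℝ) < min (b + r) (r - b) := lt_min (by linarith) (by linarith)
      have := ht.2
      linarith
  have hDerivAt : ∀ b δ, 0 < δ → Set.Icc (b - 2*δ) (b + 2*δ) ⊆ S →
      HasDerivAt ψ (D b) b := by
    intro b δ hδ hsub
    have hz := hasDerivAt_Z' (P := P) hmeas hδ (fun t ht => hsub ht)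
    have hzpos : 0 < Z b := hZpos b (hsub ⟨by linarith, by linarith⟩)
    have hlog := hz.log hzpos.ne'
    rw [hψ]
    exact hlog
  have hgood_deriv : ∀ b δ, 0 < δ → Set.Icc (b - 2*δ) (b + 2*δ) ⊆ S → deriv ψ b = D b :=
    fun b δ hδ hs => (hDerivAt b δ hδ hs).deriv
  have hDmono : ∀ b1 b2 δ1 δ2, 0 < δ1 → 0 < δ2 →
      Set.Icc (b1 - 2*δ1) (b1 + 2*δ1) ⊆ S → Set.Icc (b2 - 2*δ2) (b2 + 2*δ2) ⊆ S →
      b1 < b2 → D b1 < D b2 := by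
    intro b1 b2 δ1 δ2 hδ1 hδ2 hs1 hs2 h12
    have hS1 : (b1 - 2*δ1) ∈ S := hs1 ⟨le_refl _, by linarith⟩
    have hS2 : (b2 + 2*δ2) ∈ S := hs2 ⟨by linarith, le_refl _⟩
    have hIcc : ∀ t ∈ Set.Icc (b1 - 2*δ1) (b2 + 2*δ2),
        Integrable (fun x => Real.exp (t * h x)) P := by
      intro t ht
      exact integrable_exp_between' hmeas hS1 hS2 ht.1 ht.2
    have hδ : 0 < min δ1 δ2 := lt_min hδ1 hδ2
    have hm1 := min_le_left δ1 δ2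
    have hm2 := min_le_right δ1 δ2
    have hstrict := N_Z_strict' hmeas hnd hδ h12
      (fun t ht => hIcc t ⟨by cases ht with | intro a b => linarith,
        by cases ht with | intro a b => linarith⟩)
    have hz1 : 0 < Z b1 := hZpos b1 (hIcc b1 ⟨by linarith, by linarith⟩)
    have hz2 : 0 < Z b2 := hZpos b2 (hIcc b2 ⟨by linarith, by linarith⟩)
    rw [hDdef]
    exact (div_lt_div_iff₀ hz1 hz2).2 hstrict
  have hgmono : ∀ b1 b2 δ1 δ2, 0 < δ1 → 0 < δ2 →
      Set.Icc (b1 - 2*δ1) (b1 + 2*δ1) ⊆ S → Set.Icc (b2 - 2*δ2) (b2 + 2*δ2) ⊆ S →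
      0 ≤ b1 → b1 < b2 →
      b1 * deriv ψ b1 - ψ b1 < b2 * deriv ψ b2 - ψ b2 := by
    intro b1 b2 δ1 δ2 hδ1 hδ2 hs1 hs2 hb1 h12
    have hδ : 0 < min δ1 δ2 := lt_min hδ1 hδ2
    have hm1 := min_le_left δ1 δ2
    have hm2 := min_le_right δ1 δ2
    have hS1 : (b1 - 2*δ1) ∈ S := hs1 ⟨le_refl _, by linarith⟩
    have hS2 : (b2 + 2*δ2) ∈ S := hs2 ⟨by linarith, le_refl _⟩
    have hgood_t : ∀ t ∈ Set.Icc b1 b2,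
        Set.Icc (t - 2*(min δ1 δ2)) (t + 2*(min δ1 δ2)) ⊆ S := by
      intro t ht u hu
      refine integrable_exp_between' hmeas hS1 hS2 ?_ ?_
      · cases ht with | intro a b => cases hu with | intro c d => linarith
      · cases ht with | intro a b => cases hu with | intro c d => linarith
    have hDt : ∀ t ∈ Set.Icc b1 b2, HasDerivAt ψ (D t) t :=
      fun t ht => hDerivAt t (min δ1 δ2) hδ (hgood_t t ht)
    obtain ⟨ξ, hξ, hslope⟩ := exists_hasDerivAt_eq_slope ψ D h12
      (fun t ht => (hDt t ht).continuousAt.continuousWithinAt)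
      (fun t ht => hDt t (Set.Ioo_subset_Icc_self ht))
    have hξIcc : ξ ∈ Set.Icc b1 b2 := Set.Ioo_subset_Icc_self hξ
    have hψdiff : ψ b2 - ψ b1 = D ξ * (b2 - b1) := by
      rw [hslope, div_mul_cancel₀ _ (sub_ne_zero.2 (ne_of_gt h12))]
    have hd1 : deriv ψ b1 = D b1 := hgood_deriv b1 δ1 hδ1 hs1
    have hd2 : deriv ψ b2 = D b2 := hgood_deriv b2 δ2 hδ2 hs2
    have hDξ2 : D ξ < D b2 :=
      hDmono ξ b2 (min δ1 δ2) δ2 hδ hδ2 (hgood_t ξ hξIcc) hs2 hξ.2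
    have hD1ξ : D b1 < D ξ :=
      hDmono b1 ξ δ1 (min δ1 δ2) hδ1 hδ hs1 (hgood_t ξ hξIcc) hξ.1
    have hb2 : 0 < b2 := lt_of_le_of_lt hb1 h12
    have t1 : 0 < b2 * (D b2 - D ξ) := mul_pos hb2 (by linarith)
    have t2 : 0 ≤ b1 * (D ξ - D b1) := mul_nonneg hb1 (by linarith)
    rw [hd1, hd2]
    nlinarith [t1, t2, hψdiff]
  -- value at 0
  have hZ0 : Z 0 = 1 := by
    rw [hZdef]
    simp
  have hψ0 : ψ 0 = 0 := by rw [hψb 0, hZ0, Real.log_one]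
  -- good at r/2 and 0
  have hr2mem : (r/2 : ℝ) ∈ Set.Ioo (-r) r := ⟨by linarith, by linarith⟩
  obtain ⟨δr, hδr, hsr⟩ := hgoodIoo (r/2) hr2mem
  obtain ⟨δ0, hδ0, hs0⟩ := hgoodIoo 0 ⟨by linarith, hr⟩
  set gr : ℝ := (r/2) * deriv ψ (r/2) - ψ (r/2) with hgrdef
  have hgrpos : 0 < gr := by
    have := hgmono 0 (r/2) δ0 δr hδ0 hδr hs0 hsr (le_refl 0) (by linarith)
    rw [hψ0] at this
    rw [hgrdef]
    linarith [this]
  -- η₀ construction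
  set c : ℝ := sSup S with hcdef
  set v : ℝ := c * deriv ψ c - ψ c with hvdef
  refine ⟨if 0 < v then min gr v else gr, ?_, ?_⟩
  · by_cases hv : 0 < v
    · rw [if_pos hv]; exact lt_min hgrpos hv
    · rw [if_neg hv]; exact hgrpos
  intro η hη
  obtain ⟨hη1, hη2⟩ := hη
  have hηgr : η < gr := by
    by_cases hv : 0 < v
    · rw [if_pos hv] at hη2; exact lt_of_lt_of_le hη2 (min_le_left _ _)
    · rw [if_neg hv] at hη2; exact hη2
  have hηv : η ≠ v := by
    by_cases hv : 0 < v
    · rw [if_pos hv] at hη2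
      exact ne_of_lt (lt_of_lt_of_le hη2 (min_le_right _ _))
    · intro he; rw [he] at hη1; exact hv hη1
  -- existence via IVT
  have hcont : ContinuousOn (fun b => b * deriv ψ b - ψ b) (Set.Icc 0 (r/2)) := by
    have hcontG0 : ContinuousOn (fun b => b * D b - ψ b) (Set.Icc 0 (r/2)) := by
      intro t ht
      have htIoo : t ∈ Set.Ioo (-r) r := ⟨by cases ht with | intro a b => linarith,
        by cases ht with | intro a b => linarith⟩
      obtain ⟨δt, hδt, hst⟩ := hgoodIoo t htIoo
      have hZcont : ContinuousAt Z t := (hasDerivAt_Z' (P := P) hmeas hδt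
        (fun u hu => hst hu)).continuousAt
      have hNcont : ContinuousAt N t := continuousAt_N' (P := P) hmeas hδt (fun u hu => hst hu)
      have hzpos : 0 < Z t := hZpos t (hst ⟨by linarith, by linarith⟩)
      have hDcont : ContinuousAt D t := hNcont.div hZcont hzpos.ne'
      have hψcont : ContinuousAt ψ t := (hDerivAt t δt hδt hst).continuousAt
      exact ((continuousAt_id.mul hDcont).sub hψcont).continuousWithinAt
    refine hcontG0.congr ?_
    intro t ht
    have htIoo : t ∈ Set.Ioo (-r) r := ⟨by cases ht with | intro a b => linarith,
      by cases ht with | intro a b => linarith⟩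
    obtain ⟨δt, hδt, hst⟩ := hgoodIoo t htIoo
    simp only
    rw [hgood_deriv t δt hδt hst]
  have hIVT := intermediate_value_Icc (by linarith : (0:ℝ) ≤ r/2) hcont
  have hηmem : η ∈ Set.Icc ((fun b => b * deriv ψ b - ψ b) 0) ((fun b => b * deriv ψ b - ψ b) (r/2)) := by
    constructor
    · simp only
      rw [hψ0]
      simp
      linarith
    · exact le_of_lt hηgr
  obtain ⟨βs, hβsmem, hβseq⟩ := hIVT hηmem
  have hβspos : 0 < βs := by
    rcases hβsmem.1.lt_or_eq with hlt | heq
    · exact hlt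
    · exfalso
      rw [← heq] at hβseq
      simp only at hβseq
      rw [hψ0] at hβseq
      simp at hβseq
      linarith
  have hβsr : βs ≤ r/2 := hβsmem.2
  have hβsgood : ∃ δ > 0, Set.Icc (βs - 2*δ) (βs + 2*δ) ⊆ S :=
    hgoodIoo βs ⟨by linarith, by linarith⟩
  -- every solution is good
  have hsolgood : ∀ β, 0 < β → β * deriv ψ β - ψ β = η →
      ∃ δ > 0, Set.Icc (β - 2*δ) (β + 2*δ) ⊆ S := by
    intro β hβpos hβsol
    have hmr2 : (-(r/2) : ℝ) ∈ S := hIooS ⟨by linarith, by linarith⟩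
    have hbetween : ∀ s ∈ S, β < s → ∃ δ > 0, Set.Icc (β - 2*δ) (β + 2*δ) ⊆ S := by
      intro s hsS hβs
      refine ⟨min (β + r/2) (s - β) / 3,
        div_pos (lt_min (by linarith) (by linarith)) (by norm_num), fun u hu => ?_⟩
      have h1 : min (β + r/2) (s - β) ≤ β + r/2 := min_le_left _ _
      have h2 : min (β + r/2) (s - β) ≤ s - β := min_le_right _ _
      have h3 : (0:ℝ) < min (β + r/2) (s - β) := lt_min (by linarith) (by linarith)
      refine integrable_exp_between' hmeas hmr2 hsS ?_ ?_
      · cases hu with | intro a b => linarith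
      · cases hu with | intro a b => linarith
    by_cases hBdd : BddAbove S
    · rcases lt_trichotomy β c with hlt | heq | hgt
      · obtain ⟨s, hsS, hβs⟩ := exists_lt_of_lt_csSup ⟨0, hIooS ⟨by linarith, hr⟩⟩ hlt
        exact hbetween s hsS hβs
      · exfalso
        apply hηv
        rw [← hβsol, heq]
      · exfalso
        have hψzero : ∀ t ∈ Set.Ioi c, ψ t = 0 := by
          intro t ht
          have htS : t ∉ S := fun htS => absurd (le_csSup hBdd htS) (not_le.2 ht)
          rw [hψb t]
          have : Z t = 0 := integral_undef htS
          rw [this, Real.log_zero]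
        have hev : ψ =ᶠ[nhds β] fun _ => (0:ℝ) :=
          eventually_of_mem (Ioi_mem_nhds hgt) hψzero
        have hderiv0 : deriv ψ β = 0 := by
          rw [hev.deriv_eq]
          exact deriv_const _ _
        rw [hderiv0, hψzero β hgt] at hβsol
        simp at hβsol
        linarith
    · obtain ⟨s, hsS, hβs⟩ := (not_bddAbove_iff.1 hBdd) β
      exact hbetween s hsS hβs
  -- uniqueness among solutions
  have huniq : ∀ β β', 0 < β → β * deriv ψ β - ψ β = η →
      0 < β' → β' * deriv ψ β' - ψ β' = η → β = β' := by
    intro β β' hβp hβs hβ'p hβ's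
    obtain ⟨δ1, hδ1, hs1⟩ := hsolgood β hβp hβs
    obtain ⟨δ2, hδ2, hs2⟩ := hsolgood β' hβ'p hβ's
    rcases lt_trichotomy β β' with hlt | heq | hgt
    · exfalso
      have := hgmono β β' δ1 δ2 hδ1 hδ2 hs1 hs2 hβp.le hlt
      rw [hβs, hβ's] at this
      exact lt_irrefl η this
    · exact heq
    · exfalso
      have := hgmono β' β δ2 δ1 hδ2 hδ1 hs2 hs1 hβ'p.le hgt
      rw [hβs, hβ's] at this
      exact lt_irrefl η this
  refine ⟨⟨βs, ⟨hβspos, hβseq⟩, fun β hβ => huniq β βs hβ.1 hβ.2 hβspos hβseq⟩, ?_⟩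
  -- IsGreatest
  intro β hβpos hβsol
  have hβeq : β = βs := huniq β βs hβpos hβsol hβspos hβseq
  have hβltr : β < r := by rw [hβeq]; linarith
  obtain ⟨δβ, hδβ, hsβ⟩ := hsolgood β hβpos hβsol
  have hderivβ : deriv ψ β = D β := hgood_deriv β δβ hδβ hsβ
  have hzposβ : 0 < Z β := hZpos β (hsβ ⟨by linarith, by linarith⟩)
  constructor
  · -- membership
    obtain ⟨Q, hQ1, hQ2, hQ3, hQ4, hQ5⟩ := tilted_mem' (P := P) hmeas
      (show (0:ℝ) < 2*δβ by linarith) (fun t ht => hsβ ht)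
    have h2ψ : ψ β = Real.log (∫ x, Real.exp (β * h x) ∂P) := by rw [hψ]
    have h1D : deriv ψ β
        = (∫ x, Real.exp (β * h x) * h x ∂P) / (∫ x, Real.exp (β * h x) ∂P) := hderivβ
    refine ⟨Q, hQ1, hQ2, hQ3, ?_, ?_⟩
    · rw [hQ4, ← h1D, ← h2ψ, hβsol]
    · rw [hQ5]
      exact h1D
  · -- upper bound
    rintro w ⟨Q, hQ1, hQ2, hQ3, hQ4, rfl⟩
    have hub := upper_bound' hmeas hr hint hβpos hβltr hQ1 hQ2 hQ3 hQ4
    have h2ψ : ψ β = Real.log (∫ x, Real.exp (β * h x) ∂P) := by rw [hψ]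
    have hηeq : Real.log (∫ x, Real.exp (β * h x) ∂P) + η = β * deriv ψ β := by
      rw [← hβsol, h2ψ]
      ring
    rw [hηeq] at hub
    exact le_of_mul_le_mul_left hub hβpos
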